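/- For natural numbers n, m with m ≤ n: Σ_{i=0}^{m} C(m,i) · (n-m) · (n-m+i)^(i-1) · (m-i)^(m-i) = n^m, where the i = 0 term is interpreted as (m)^m (i.e., (n-m)·(n-m)^(-1)·m^m) when n > m. -/

import Mathlib

open Finset Polynomial

namespace Stmt6Aux

/-- Coefficients of the Abel sum. -/
def A (m : ℕ) (x : ℤ) (k : ℕ) : ℤ :=
  if k = 0 then 1 else (m.choose k : ℤ) * x * (x + k) ^ (k - 1)

/-- The Abel sum. -/
def F (m : ℕ) (x y : ℤ) : ℤ :=
  ∑ k ∈ Finset.range (m + 1), A m x k * (y + m - k) ^ (m - k)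

lemma fwd_kill : ∀ (m : ℕ) (P : Polynomial ℤ), P.natDegree < m →
    (fwdDiff (1 : ℤ))^[m] (fun t => P.eval t) = fun _ => 0 := by
  intro m
  induction m with
  | zero => intro P h; omega
  | succ m ih =>
    intro P h
    rw [Function.iterate_succ_apply]
    by_cases h0 : P.natDegree = 0
    · obtain ⟨a, rfl⟩ := Polynomial.natDegree_eq_zero.mp h0
      have hz : fwdDiff (1 : ℤ) (fun t => (Polynomial.C a).eval t) = fun _ => (0 : ℤ) := by
        funext t; simp [fwdDiff]
      rw [hz]
      have : fwdDiff (1 : ℤ) (fun _ => (0 : ℤ)) = fun _ => (0 : ℤ) := by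
        funext t; simp [fwdDiff]
      exact Function.iterate_fixed this m
    · have hP0 : P ≠ 0 := fun hh => h0 (by simp [hh])
      set Q : Polynomial ℤ := P.comp (X + C 1) - P with hQ
      have hQeval : fwdDiff (1 : ℤ) (fun t => P.eval t) = fun t => Q.eval t := by
        funext t; simp [fwdDiff, hQ, Polynomial.eval_comp]
      have hX1 : (X + C 1 : Polynomial ℤ).natDegree = 1 := Polynomial.natDegree_X_add_C 1
      have hlead : (P.comp (X + C 1)).leadingCoeff = P.leadingCoeff := by
        rw [Polynomial.leadingCoeff_comp (by rw [hX1]; exact one_ne_zero),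
          (Polynomial.monic_X_add_C (1 : ℤ)).leadingCoeff, one_pow, mul_one]
      have hc0 : P.comp (X + C 1) ≠ 0 := by
        intro hh
        apply hP0
        rw [← Polynomial.leadingCoeff_eq_zero, ← hlead, hh, Polynomial.leadingCoeff_zero]
      have hn : (P.comp (X + C 1)).natDegree = P.natDegree := by
        rw [Polynomial.natDegree_comp, hX1, mul_one]
      have hdegeq : (P.comp (X + C 1)).degree = P.degree := by
        rw [Polynomial.degree_eq_natDegree hc0, Polynomial.degree_eq_natDegree hP0, hn]
      have hlt : Q.degree < P.degree := by
        have := Polynomial.degree_sub_lt hdegeq hc0 hlead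
        rwa [hdegeq] at this
      have hQdeg : Q.natDegree < m := by
        by_cases hQ0 : Q = 0
        · rw [hQ0]; simp; omega
        · have := Polynomial.natDegree_lt_natDegree hQ0 hlt
          omega
      rw [hQeval]
      exact ih Q hQdeg

lemma alt_sum (m : ℕ) (hm : 1 ≤ m) (x : ℤ) :
    ∑ k ∈ Finset.range (m + 1), (-1 : ℤ) ^ (m - k) * (m.choose k : ℤ) * (x + k) ^ (m - 1) = 0 := by
  have hdeg : ((X + C x : Polynomial ℤ) ^ (m - 1)).natDegree < m := by
    rw [Polynomial.natDegree_pow, Polynomial.natDegree_X_add_C]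
    omega
  have h := fwd_kill m ((X + C x) ^ (m - 1)) hdeg
  have h0 := congrFun h 0
  rw [fwdDiff_iter_eq_sum_shift] at h0
  simp only [smul_eq_mul, Polynomial.eval_pow, Polynomial.eval_add, Polynomial.eval_X,
    Polynomial.eval_C, zero_add, nsmul_eq_mul, mul_one] at h0
  rw [← h0]
  refine Finset.sum_congr rfl fun k hk => ?_
  ring_nf

lemma F_base (m : ℕ) (hm : 1 ≤ m) (x : ℤ) : F m x (-x - m) = 0 := by
  have key : F m x (-x - m)
      = x * ∑ k ∈ Finset.range (m + 1),
          (-1 : ℤ) ^ (m - k) * (m.choose k : ℤ) * (x + k) ^ (m - 1) := by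
    rw [F, Finset.mul_sum]
    refine Finset.sum_congr rfl fun k hk => ?_
    rw [Finset.mem_range] at hk
    rcases Nat.eq_zero_or_pos k with rfl | hk1
    · obtain ⟨e, rfl⟩ : ∃ e, m = e + 1 := ⟨m - 1, by omega⟩
      have hA : A (e + 1) x 0 = 1 := by simp [A]
      rw [hA]
      simp only [Nat.sub_zero, Nat.add_sub_cancel, Nat.choose_zero_right, Nat.cast_one,
        Nat.cast_zero, add_zero]
      push_cast
      ring
    · have hk0 : k ≠ 0 := by omega
      simp only [A, if_neg hk0]
      have e : (-x - (m : ℤ) + m - k) = -(x + k) := by ring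
      rw [e, neg_pow]
      have e2 : m - 1 = k - 1 + (m - k) := by omega
      rw [e2, pow_add]
      ring
  rw [key, alt_sum m hm x, mul_zero]

lemma chooseTri (m j k : ℕ) (h : k + j ≤ m) :
    m.choose k * (m - k).choose j = m.choose j * (m - j).choose k := by
  have h1 := Nat.choose_mul (n := m) (show k ≤ k + j from Nat.le_add_right _ _)
  have h2 := Nat.choose_mul (n := m) (show j ≤ k + j from Nat.le_add_left _ _)
  rw [Nat.add_sub_cancel_left] at h1
  rw [Nat.add_sub_cancel] at h2
  have h3 : (k + j).choose k = (k + j).choose j := Nat.choose_symm_add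
  rw [← h1, h3, h2]

lemma keyA (m j k : ℕ) (x : ℤ) (hj : j ≤ m) (hk : k ≤ m - j) :
    A m x k * ((m - k).choose j : ℤ) = (m.choose j : ℤ) * A (m - j) x k := by
  rcases Nat.eq_zero_or_pos k with rfl | hk1
  · simp [A]
  · have hk0 : k ≠ 0 := by omega
    simp only [A, if_neg hk0]
    have := chooseTri m j k (by omega)
    have hc : (m.choose k : ℤ) * ((m - k).choose j : ℤ)
        = (m.choose j : ℤ) * ((m - j).choose k : ℤ) := by exact_mod_cast congrArg (Nat.cast : ℕ → ℤ) this
    calc (m.choose k : ℤ) * x * (x + k) ^ (k - 1) * ((m - k).choose j : ℤ)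
        = (m.choose k : ℤ) * ((m - k).choose j : ℤ) * (x * (x + k) ^ (k - 1)) := by ring
      _ = (m.choose j : ℤ) * ((m - j).choose k : ℤ) * (x * (x + k) ^ (k - 1)) := by rw [hc]
      _ = (m.choose j : ℤ) * ((m - j).choose k * x * (x + k) ^ (k - 1)) := by ring

lemma one_add_pow (z : ℤ) (e : ℕ) :
    (z + 1) ^ e = ∑ j ∈ Finset.range (e + 1), (e.choose j : ℤ) * z ^ (e - j) := by
  rw [add_comm z 1, add_pow]
  exact Finset.sum_congr rfl fun j hj => by rw [one_pow]; ring

lemma range_split (m : ℕ) (g : ℕ → ℤ) :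
    ∑ j ∈ Finset.range (m + 1), g j = g 0 + ∑ j ∈ Finset.Icc 1 m, g j := by
  rw [Finset.range_eq_Ico, Finset.sum_eq_sum_Ico_succ_bot (Nat.succ_pos m), ← Finset.Ico_add_one_right_eq_Icc]
  rfl

lemma tri {M : Type*} [AddCommMonoid M] (m : ℕ) (f : ℕ → ℕ → M) :
    ∑ k ∈ Finset.range (m + 1), ∑ j ∈ Finset.Icc 1 (m - k), f k j
      = ∑ j ∈ Finset.Icc 1 m, ∑ k ∈ Finset.range (m - j + 1), f k j := by
  rw [Finset.sum_sigma', Finset.sum_sigma']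
  refine Finset.sum_nbij' (fun x => ⟨x.2, x.1⟩) (fun x => ⟨x.2, x.1⟩) ?_ ?_
    (fun _ _ => rfl) (fun _ _ => rfl) (fun _ _ => rfl) <;>
  simp only [Finset.mem_sigma, Finset.mem_range, Finset.mem_Icc, Sigma.forall] <;>
  · rintro a b ⟨h1, h2⟩
    omega

lemma F_diff (m : ℕ) (x y : ℤ) :
    F m x (y + 1) = F m x y + ∑ j ∈ Finset.Icc 1 m, (m.choose j : ℤ) * F (m - j) x (y + j) := by
  have step1 : F m x (y + 1) = ∑ k ∈ Finset.range (m + 1), ∑ j ∈ Finset.range (m - k + 1),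
      A m x k * ((m - k).choose j : ℤ) * (y + m - k) ^ (m - k - j) := by
    rw [F]
    refine Finset.sum_congr rfl fun k hk => ?_
    have e : (y + 1 + (m : ℤ) - k) = (y + m - k) + 1 := by ring
    rw [e, one_add_pow, Finset.mul_sum]
    exact Finset.sum_congr rfl fun j hj => by ring
  rw [step1]
  have step2 : ∀ k, ∑ j ∈ Finset.range (m - k + 1),
      A m x k * ((m - k).choose j : ℤ) * (y + m - k) ^ (m - k - j)
      = A m x k * (y + m - k) ^ (m - k)
        + ∑ j ∈ Finset.Icc 1 (m - k), A m x k * ((m - k).choose j : ℤ) * (y + m - k) ^ (m - k - j) := by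
    intro k
    rw [range_split]
    simp
  rw [Finset.sum_congr rfl (fun k _ => step2 k), Finset.sum_add_distrib]
  congr 1
  rw [tri]
  refine Finset.sum_congr rfl fun j hj => ?_
  rw [Finset.mem_Icc] at hj
  rw [F, Finset.mul_sum]
  refine Finset.sum_congr rfl fun k hk => ?_
  rw [Finset.mem_range] at hk
  have hkj : k ≤ m - j := by omega
  have e1 : m - k - j = m - j - k := by omega
  have e2 : (y + (m : ℤ) - k) = y + j + ((m - j : ℕ) : ℤ) - k := by omega
  rw [e1, e2]
  calc A m x k * ((m - k).choose j : ℤ) * (y + j + ((m - j : ℕ) : ℤ) - k) ^ (m - j - k)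
      = (A m x k * ((m - k).choose j : ℤ)) * (y + j + ((m - j : ℕ) : ℤ) - k) ^ (m - j - k) := by ring
    _ = ((m.choose j : ℤ) * A (m - j) x k) * (y + j + ((m - j : ℕ) : ℤ) - k) ^ (m - j - k) := by
        rw [keyA m j k x hj.2 hkj]
    _ = (m.choose j : ℤ) * (A (m - j) x k * (y + j + ((m - j : ℕ) : ℤ) - k) ^ (m - j - k)) := by ring

lemma F_eq : ∀ (m : ℕ) (x : ℤ) (t : ℕ), F m x ((t : ℤ) - x - m) = (t : ℤ) ^ m := by
  intro m
  induction m using Nat.strong_induction_on with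
  | _ m ih =>
    intro x t
    induction t with
    | zero =>
      rcases Nat.eq_zero_or_pos m with rfl | hm
      · simp [F, A]
      · have hb := F_base m hm x
        have e : ((0 : ℕ) : ℤ) - x - m = -x - m := by push_cast; ring
        rw [e, hb, eq_comm]
        exact zero_pow (by omega)
    | succ t iht =>
      have e : ((t + 1 : ℕ) : ℤ) - x - m = ((t : ℤ) - x - m) + 1 := by push_cast; ring
      rw [e, F_diff, iht]
      have hterm : ∀ j ∈ Finset.Icc 1 m,
          (m.choose j : ℤ) * F (m - j) x ((t : ℤ) - x - m + j)
            = (m.choose j : ℤ) * (t : ℤ) ^ (m - j) := by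
        intro j hj
        rw [Finset.mem_Icc] at hj
        have e2 : (t : ℤ) - x - m + j = (t : ℤ) - x - ((m - j : ℕ) : ℤ) := by omega
        rw [e2, ih (m - j) (by omega) x t]
      rw [Finset.sum_congr rfl hterm]
      have hb := one_add_pow (t : ℤ) m
      rw [range_split] at hb
      simp only [Nat.choose_zero_right, Nat.cast_one, one_mul, Nat.sub_zero] at hb
      push_cast
      rw [hb]

end Stmt6Aux

/-- The special case `a = n - m`, `b = m` of Abel's binomial identity, over ℕ:
`Σ_{i=0}^{m} C(m,i)·(n-m)·(n-m+i)^(i-1)·(m-i)^(m-i) = n^m`, where the `i = 0`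
term is interpreted as `m^m`. -/
theorem stmt6 (n m : ℕ) (hmn : m ≤ n) :
    ∑ i ∈ Finset.range (m + 1),
      (if i = 0 then m ^ m
       else Nat.choose m i * (n - m) * (n - m + i) ^ (i - 1) * (m - i) ^ (m - i)) = n ^ m := by
  have h := Stmt6Aux.F_eq m ((n : ℤ) - m) n
  have e : (n : ℤ) - ((n : ℤ) - m) - m = 0 := by ring
  rw [e] at h
  have hcast : ((∑ i ∈ Finset.range (m + 1),
      (if i = 0 then m ^ m
       else Nat.choose m i * (n - m) * (n - m + i) ^ (i - 1) * (m - i) ^ (m - i)) : ℕ) : ℤ)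
      = Stmt6Aux.F m ((n : ℤ) - m) 0 := by
    rw [Nat.cast_sum, Stmt6Aux.F]
    refine Finset.sum_congr rfl fun k hk => ?_
    rw [Finset.mem_range] at hk
    rcases Nat.eq_zero_or_pos k with rfl | hk1
    · have hA : Stmt6Aux.A m ((n : ℤ) - m) 0 = 1 := by simp [Stmt6Aux.A]
      rw [if_pos rfl, hA, Nat.sub_zero]
      push_cast
      ring
    · have hk0 : k ≠ 0 := by omega
      rw [if_neg hk0]
      simp only [Stmt6Aux.A, if_neg hk0]
      have h1 : ((n - m + k : ℕ) : ℤ) = (n : ℤ) - m + k := by omega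
      have h2 : ((m - k : ℕ) : ℤ) = (m : ℤ) - k := by omega
      have h3 : ((n - m : ℕ) : ℤ) = (n : ℤ) - m := by omega
      have h4 : (0 : ℤ) + (m : ℤ) - k = (m : ℤ) - k := by ring
      push_cast [h1, h2, h3]
      ring
  have : ((∑ i ∈ Finset.range (m + 1),
      (if i = 0 then m ^ m
       else Nat.choose m i * (n - m) * (n - m + i) ^ (i - 1) * (m - i) ^ (m - i)) : ℕ) : ℤ)
      = ((n ^ m : ℕ) : ℤ) := by
    rw [hcast, h]; push_cast; ring
  exact_mod_cast this
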